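/- (Strong Abelian Property) Let G be a locally finite graph with a nonempty sink set S, G' = G∖S, an initial rotor configuration ρ₀ on G' and a particle configuration σ₀. Let u₁, u₂ : G' → ℕ be finitely supported, and write F^{u_i}(ρ₀, σ₀) = (ρ_i, σ_i) for i = 1, 2. If σ₁ = σ₂ on G', and both ρ₁ and ρ₂ are acyclic, then u₁ = u₂. -/

import Mathlib

/-!
**Strong Abelian Property** (Kager–Levine). Let `G` be a locally finite graph with
a nonempty sink set `S` and `G' = G ∖ S`, with a cyclic ordering of the neighbours
of each vertex.  Let `ρ₀` be a rotor configuration on `G'`, `σ₀` a particle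
configuration, and `u₁, u₂ : G' → ℕ` finitely supported, with
`F^{u_i}(ρ₀, σ₀) = (ρ_i, σ_i)`.  If `σ₁ = σ₂` on `G'` and both `ρ₁, ρ₂` are
acyclic, then `u₁ = u₂`.
-/

namespace Stmt3

variable {V : Type*} [DecidableEq V]

/-- Advance the rotor at `x` currently pointing at `y`: if `y = x_i` in the cyclic
ordering `c x` of the `deg x` neighbours of `x`, the rotor moves to
`x_{(i+1) mod deg x}`. -/
noncomputable def plus (G : SimpleGraph V) [G.LocallyFinite] (c : V → ℕ → V)
    (x y : V) : V :=
  if hi : ∃ i, i < G.degree x ∧ c x i = y then c x ((Nat.find hi + 1) % G.degree x)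
  else y

/-- The number of particles sent from `x` to `y` when `x`, whose rotor initially
points at `ρx`, is toppled `n` times: the `k`-th toppling sends a particle to the
rotor direction after `k` advances. -/
noncomputable def sentCount (G : SimpleGraph V) [G.LocallyFinite] (c : V → ℕ → V)
    (x : V) (ρx : V) (n : ℕ) (y : V) : ℕ :=
  ((Finset.range n).filter (fun k => (plus G c x)^[k + 1] ρx = y)).card

/-- `F^u (ρ, σ)`: the result of toppling each vertex `x` exactly `u x` times
(well defined by the abelian property).  The rotor at `x` is advanced `u x`
times, and each vertex `y` loses `u y` particles and receives one particle for
each toppling of a vertex `x` whose rotor then pointed at `y`. -/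
noncomputable def Fpow (G : SimpleGraph V) [G.LocallyFinite] (c : V → ℕ → V)
    (u : V → ℕ) (ρ : V → V) (σ : V → ℤ) : (V → V) × (V → ℤ) :=
  (fun x => (plus G c x)^[u x] (ρ x),
   fun y => σ y - u y + ∑ᶠ x, (sentCount G c x (ρ x) (u x) y : ℤ))

/-- A rotor configuration `ρ` is acyclic on the vertex set `A` if the directed
graph on `A` with edge set `{(x, ρ x) : x ∈ A}` contains no directed cycle. -/
def AcyclicOn (A : Set V) (ρ : V → V) : Prop :=
  ¬ ∃ (x : V) (n : ℕ), 0 < n ∧ (∀ i < n, ρ^[i] x ∈ A) ∧ ρ^[n] x = x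

set_option linter.unusedSectionVars false

lemma exists_cycle {A : Finset V} (hA : A.Nonempty) (f : V → V)
    (hf : ∀ x ∈ A, f x ∈ A) :
    ∃ (x : V) (n : ℕ), 0 < n ∧ (∀ i < n, f^[i] x ∈ A) ∧ f^[n] x = x := by
  obtain ⟨x, hx⟩ := hA
  have hit : ∀ i, f^[i] x ∈ A := by
    intro i; induction i with
    | zero => simpa using hx
    | succ i ih => rw [Function.iterate_succ_apply']; exact hf _ ih
  have h : ∃ i ∈ Finset.range (A.card + 1), ∃ j ∈ Finset.range (A.card + 1),
      i ≠ j ∧ f^[i] x = f^[j] x :=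
    Finset.exists_ne_map_eq_of_card_lt_of_maps_to (by simp) (fun i _ => hit i)
  obtain ⟨i, hi, j, hj, hij, hfe⟩ := h
  rcases Nat.lt_or_ge i j with h | h
  · refine ⟨f^[i] x, j - i, by omega, fun m _ => ?_, ?_⟩
    · rw [← Function.iterate_add_apply]; exact hit _
    · rw [← Function.iterate_add_apply]
      have : j - i + i = j := by omega
      rw [this]; exact hfe.symm
  · have h' : j < i := by omega
    refine ⟨f^[j] x, i - j, by omega, fun m _ => ?_, ?_⟩
    · rw [← Function.iterate_add_apply]; exact hit _
    · rw [← Function.iterate_add_apply]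
      have : i - j + j = i := by omega
      rw [this]; exact hfe

lemma sum_filter_card_le (r : ℕ → V) (I : Finset ℕ) (B : Finset V) :
    ∑ y ∈ B, (I.filter (fun k => r k = y)).card ≤ I.card := by
  classical
  have hd : ∀ y ∈ B, ∀ z ∈ B, y ≠ z →
      Disjoint (I.filter (fun k => r k = y)) (I.filter (fun k => r k = z)) := by
    intro y _ z _ hyz
    refine Finset.disjoint_left.mpr ?_
    intro k hk hk'
    simp only [Finset.mem_filter] at hk hk'
    exact hyz (hk.2.symm.trans hk'.2)
  calc ∑ y ∈ B, (I.filter (fun k => r k = y)).card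
      = (B.biUnion (fun y => I.filter (fun k => r k = y))).card :=
        (Finset.card_biUnion hd).symm
    _ ≤ I.card := Finset.card_le_card (by
        intro k hk
        simp only [Finset.mem_biUnion, Finset.mem_filter] at hk
        obtain ⟨y, _, hk, _⟩ := hk
        exact hk)

/-- number of particles sent from `y` to `x` during topplings `m+1,…,n`. -/
noncomputable def extraCount (G : SimpleGraph V) [G.LocallyFinite] (c : V → ℕ → V)
    (y ρy : V) (m n : ℕ) (x : V) : ℕ :=
  ((Finset.Ico m n).filter (fun k => (plus G c y)^[k + 1] ρy = x)).card

lemma Fpow_fst (G : SimpleGraph V) [G.LocallyFinite] (c : V → ℕ → V)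
    (u : V → ℕ) (ρ : V → V) (σ : V → ℤ) (y : V) :
    (Fpow G c u ρ σ).1 y = (plus G c y)^[u y] (ρ y) := rfl

lemma Fpow_snd (G : SimpleGraph V) [G.LocallyFinite] (c : V → ℕ → V)
    (u : V → ℕ) (ρ : V → V) (σ : V → ℤ) (y : V) :
    (Fpow G c u ρ σ).2 y = σ y - u y + ∑ᶠ x, (sentCount G c x (ρ x) (u x) y : ℤ) := rfl

lemma sent_split (G : SimpleGraph V) [G.LocallyFinite] (c : V → ℕ → V)
    (y ρy x : V) {m n : ℕ} (h : m ≤ n) :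
    sentCount G c y ρy n x = sentCount G c y ρy m x + extraCount G c y ρy m n x := by
  unfold sentCount extraCount
  rw [Finset.range_eq_Ico,
    ← Finset.Ico_union_Ico_eq_Ico (Nat.zero_le m) h, Finset.filter_union,
    Finset.card_union_of_disjoint]
  rw [Finset.range_eq_Ico]
  exact (Finset.Ico_disjoint_Ico_consecutive 0 m n).mono
    (Finset.filter_subset (fun k => (plus G c y)^[k + 1] ρy = x) _)
    (Finset.filter_subset (fun k => (plus G c y)^[k + 1] ρy = x) _)

lemma sent_mono (G : SimpleGraph V) [G.LocallyFinite] (c : V → ℕ → V)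
    (y ρy x : V) {m n : ℕ} (h : m ≤ n) :
    sentCount G c y ρy m x ≤ sentCount G c y ρy n x :=
  Finset.card_le_card (Finset.filter_subset_filter _ (Finset.range_subset_range.mpr h))

lemma aux (G : SimpleGraph V) [G.LocallyFinite] (c : V → ℕ → V)
    (S : Set V) (ρ₀ : V → V) (σ₀ : V → ℤ)
    (u₁ u₂ : V → ℕ)
    (hu₁fin : (Function.support u₁).Finite) (hu₂fin : (Function.support u₂).Finite)
    (hu₁S : ∀ s ∈ S, u₁ s = 0)
    (hσ : ∀ x ∉ S, (Fpow G c u₁ ρ₀ σ₀).2 x = (Fpow G c u₂ ρ₀ σ₀).2 x)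
    (hρ₁ : AcyclicOn Sᶜ (Fpow G c u₁ ρ₀ σ₀).1) :
    ∀ x, u₁ x ≤ u₂ x := by
  classical
  by_contra hcon
  push_neg at hcon
  obtain ⟨x₀, hx₀⟩ := hcon
  set T : Finset V := hu₁fin.toFinset ∪ hu₂fin.toFinset with hT
  set A : Finset V := T.filter (fun x => u₂ x < u₁ x) with hA
  have hmemA : ∀ x, x ∈ A ↔ u₂ x < u₁ x := by
    intro x
    constructor
    · intro hx; exact (Finset.mem_filter.mp hx).2
    · intro hx
      refine Finset.mem_filter.mpr ⟨?_, hx⟩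
      apply Finset.mem_union_left
      simp only [Set.Finite.mem_toFinset, Function.mem_support]
      omega
  have hAS : ∀ x ∈ A, x ∉ S := by
    intro x hx hxS
    have h1 := hu₁S x hxS
    have h2 := (hmemA x).mp hx
    omega
  have hsub : ∀ (u : V → ℕ), Function.support u ⊆ ↑T → ∀ x : V,
      (Function.support fun y => (sentCount G c y (ρ₀ y) (u y) x : ℤ)) ⊆ ↑T := by
    intro u hu x y hy
    apply hu
    simp only [Function.mem_support] at hy ⊢
    intro h0
    apply hy
    simp [sentCount, h0]
  have hsub1 : Function.support u₁ ⊆ ↑T := by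
    simp only [hT, Finset.coe_union, Set.Finite.coe_toFinset]
    exact Set.subset_union_left
  have hsub2 : Function.support u₂ ⊆ ↑T := by
    simp only [hT, Finset.coe_union, Set.Finite.coe_toFinset]
    exact Set.subset_union_right
  -- the difference counts
  have key1 : ∀ x ∈ A, (u₁ x : ℤ) - u₂ x
      ≤ ∑ y ∈ A, (extraCount G c y (ρ₀ y) (u₂ y) (u₁ y) x : ℤ) := by
    intro x hxA
    have heq := hσ x (hAS x hxA)
    rw [Fpow_snd, Fpow_snd,
      finsum_eq_finset_sum_of_support_subset _ (hsub u₁ hsub1 x),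
      finsum_eq_finset_sum_of_support_subset _ (hsub u₂ hsub2 x)] at heq
    have hsplit : ∑ y ∈ T, ((sentCount G c y (ρ₀ y) (u₁ y) x : ℤ)
        - (sentCount G c y (ρ₀ y) (u₂ y) x : ℤ)) = (u₁ x : ℤ) - u₂ x := by
      rw [Finset.sum_sub_distrib]; linarith
    rw [← Finset.sum_filter_add_sum_filter_not T (fun y => u₂ y < u₁ y)] at hsplit
    have h1 : ∑ y ∈ T.filter (fun y => u₂ y < u₁ y),
        ((sentCount G c y (ρ₀ y) (u₁ y) x : ℤ) - (sentCount G c y (ρ₀ y) (u₂ y) x : ℤ))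
        = ∑ y ∈ A, (extraCount G c y (ρ₀ y) (u₂ y) (u₁ y) x : ℤ) := by
      rw [hA]
      refine Finset.sum_congr rfl ?_
      intro y hy
      have hlt : u₂ y < u₁ y := (Finset.mem_filter.mp hy).2
      rw [sent_split G c y (ρ₀ y) x (le_of_lt hlt)]
      push_cast
      ring
    have h2 : ∑ y ∈ T.filter (fun y => ¬ u₂ y < u₁ y),
        ((sentCount G c y (ρ₀ y) (u₁ y) x : ℤ) - (sentCount G c y (ρ₀ y) (u₂ y) x : ℤ))
        ≤ 0 := by
      apply Finset.sum_nonpos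
      intro y hy
      have hle : u₁ y ≤ u₂ y := by
        have := (Finset.mem_filter.mp hy).2; omega
      have := sent_mono G c y (ρ₀ y) x hle
      simp only [sub_nonpos]
      exact_mod_cast this
    linarith
  have key2 : ∀ y ∈ A, ∀ B : Finset V,
      ∑ x ∈ B, (extraCount G c y (ρ₀ y) (u₂ y) (u₁ y) x : ℤ) ≤ (u₁ y : ℤ) - u₂ y := by
    intro y hy B
    have hle := sum_filter_card_le (fun k => (plus G c y)^[k + 1] (ρ₀ y))
      (Finset.Ico (u₂ y) (u₁ y)) B
    have hyle : u₂ y ≤ u₁ y := le_of_lt ((hmemA y).mp hy)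
    calc ∑ x ∈ B, (extraCount G c y (ρ₀ y) (u₂ y) (u₁ y) x : ℤ)
        = ((∑ x ∈ B, extraCount G c y (ρ₀ y) (u₂ y) (u₁ y) x : ℕ) : ℤ) := by push_cast; rfl
      _ ≤ (((Finset.Ico (u₂ y) (u₁ y)).card : ℕ) : ℤ) := by exact_mod_cast hle
      _ = (u₁ y : ℤ) - u₂ y := by rw [Nat.card_Ico]; push_cast [hyle]; ring
  have h3 : ∑ x ∈ A, ((u₁ x : ℤ) - u₂ x)
      ≤ ∑ y ∈ A, ∑ x ∈ A, (extraCount G c y (ρ₀ y) (u₂ y) (u₁ y) x : ℤ) := by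
    rw [Finset.sum_comm]
    exact Finset.sum_le_sum key1
  have h4 : ∀ y ∈ A, ∑ x ∈ A, (extraCount G c y (ρ₀ y) (u₂ y) (u₁ y) x : ℤ)
      ≤ (u₁ y : ℤ) - u₂ y := fun y hy => key2 y hy A
  have h5 : ∑ y ∈ A, ∑ x ∈ A, (extraCount G c y (ρ₀ y) (u₂ y) (u₁ y) x : ℤ)
      = ∑ y ∈ A, ((u₁ y : ℤ) - u₂ y) :=
    le_antisymm (Finset.sum_le_sum h4) h3
  have h6 : ∀ y ∈ A, ∑ x ∈ A, (extraCount G c y (ρ₀ y) (u₂ y) (u₁ y) x : ℤ)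
      = (u₁ y : ℤ) - u₂ y := (Finset.sum_eq_sum_iff_of_le h4).mp h5
  -- the final rotor maps A into A
  have hmap : ∀ y ∈ A, (Fpow G c u₁ ρ₀ σ₀).1 y ∈ A := by
    intro y hy
    rw [Fpow_fst]
    by_contra hzA
    have hins := key2 y hy (insert ((plus G c y)^[u₁ y] (ρ₀ y)) A)
    rw [Finset.sum_insert hzA, h6 y hy] at hins
    have hdz : (extraCount G c y (ρ₀ y) (u₂ y) (u₁ y) ((plus G c y)^[u₁ y] (ρ₀ y)) : ℤ)
        ≤ 0 := by linarith
    have hlt : u₂ y < u₁ y := (hmemA y).mp hy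
    have hk : (u₁ y - 1) ∈ (Finset.Ico (u₂ y) (u₁ y)).filter
        (fun k => (plus G c y)^[k + 1] (ρ₀ y) = (plus G c y)^[u₁ y] (ρ₀ y)) := by
      simp only [Finset.mem_filter, Finset.mem_Ico]
      refine ⟨⟨by omega, by omega⟩, ?_⟩
      have he : u₁ y - 1 + 1 = u₁ y := by omega
      rw [he]
    have hpos : 0 < extraCount G c y (ρ₀ y) (u₂ y) (u₁ y) ((plus G c y)^[u₁ y] (ρ₀ y)) :=
      Finset.card_pos.mpr ⟨_, hk⟩
    have : (0 : ℤ) < extraCount G c y (ρ₀ y) (u₂ y) (u₁ y) ((plus G c y)^[u₁ y] (ρ₀ y)) := by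
      exact_mod_cast hpos
    linarith
  obtain ⟨x, n, hn, hin, hcyc⟩ :=
    exists_cycle ⟨x₀, (hmemA x₀).mpr hx₀⟩ (Fpow G c u₁ ρ₀ σ₀).1 hmap
  exact hρ₁ ⟨x, n, hn, fun i hi => hAS _ (hin i hi), hcyc⟩


/-- **Strong Abelian Property.** -/
theorem strong_abelian_property (G : SimpleGraph V) [G.LocallyFinite]
    (c : V → ℕ → V)
    (hc : ∀ x y : V, G.Adj x y ↔ ∃ i < G.degree x, c x i = y)
    (hinj : ∀ x : V, Set.InjOn (c x) (Set.Iio (G.degree x)))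
    (S : Set V) (hS : S.Nonempty)
    (ρ₀ : V → V) (hρ₀ : ∀ x ∉ S, G.Adj x (ρ₀ x))
    (σ₀ : V → ℤ) (hσ₀ : (Function.support σ₀).Finite)
    (u₁ u₂ : V → ℕ)
    (hu₁fin : (Function.support u₁).Finite) (hu₂fin : (Function.support u₂).Finite)
    (hu₁S : ∀ s ∈ S, u₁ s = 0) (hu₂S : ∀ s ∈ S, u₂ s = 0)
    (hσ : ∀ x ∉ S, (Fpow G c u₁ ρ₀ σ₀).2 x = (Fpow G c u₂ ρ₀ σ₀).2 x)
    (hρ₁ : AcyclicOn Sᶜ (Fpow G c u₁ ρ₀ σ₀).1)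
    (hρ₂ : AcyclicOn Sᶜ (Fpow G c u₂ ρ₀ σ₀).1) :
    u₁ = u₂ := by
  funext x
  exact le_antisymm
    (aux G c S ρ₀ σ₀ u₁ u₂ hu₁fin hu₂fin hu₁S hσ hρ₁ x)
    (aux G c S ρ₀ σ₀ u₂ u₁ hu₂fin hu₁fin hu₂S (fun x hx => (hσ x hx).symm) hρ₂ x)


end Stmt3
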